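/- (Gap underlying the inapproximability claim of Theorem 2.) If the 3SAT instance φ is unsatisfiable, then for every assignment α : {1,…,n} → {true,false} there exists a clause index j ∈ {1,…,m} such that every directed s-t path in G_φ that follows α has total cost at least 1 under c^j; whereas if φ is satisfiable there is an assignment α such that for every j ∈ {1,…,m} some directed s-t path following α has total cost 0 under c^j. -/

import Mathlib

/-- Vertices of the graph `G_φ`: source `s`, sink `t`, and for each variable index
`i ∈ {1,…,n}` the four vertices `tᵢ¹, tᵢ², fᵢ¹, fᵢ²`.  Here `Vtx.mid i second isTrue`
is `tᵢ` if `isTrue = true`, `fᵢ` if `isTrue = false`; superscript `2` iff `second = true`. -/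
inductive Vtx (n : ℕ) : Type where
  | s : Vtx n
  | t : Vtx n
  | mid (i : Fin n) (second : Bool) (isTrue : Bool) : Vtx n
deriving DecidableEq

/-- The directed edges of `G_φ`. -/
def GEdge (n : ℕ) : Vtx n → Vtx n → Prop :=
  fun a b =>
    match a, b with
    | .s, .mid i false _ => (i : ℕ) = 0
    | .mid i false _, .mid j false _ => (j : ℕ) = (i : ℕ) + 1
    | .mid i true _, .mid j true _ => (j : ℕ) = (i : ℕ) + 1
    | .mid i false v, .mid j true w => j = i ∧ w = v
    | .mid i true _, .t => (i : ℕ) = n - 1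
    | _, _ => False

/-- The edge costs `c^j` determined by a clause `C` (a set of literals `(i, ε)`):
a bridge edge `(tᵢ¹,tᵢ²)` (resp. `(fᵢ¹,fᵢ²)`) costs `0` if `(i,true) ∈ C`
(resp. `(i,false) ∈ C`) and `1` otherwise; all non-bridge edges cost `0`. -/
def cost (n : ℕ) (C : Finset (Fin n × Bool)) : Vtx n → Vtx n → ℕ
  | .mid i false v, .mid j true w =>
      if j = i ∧ w = v then (if (i, v) ∈ C then 0 else 1) else 0
  | _, _ => 0

/-- The cost of a path (list of vertices) under the scenario of clause `C`:
the sum of the edge costs over consecutive pairs. -/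
def pathCost (n : ℕ) (C : Finset (Fin n × Bool)) (P : List (Vtx n)) : ℕ :=
  ((P.zip P.tail).map fun q => cost n C q.1 q.2).sum

/-- A directed `s`-`t` path in `G_φ`: consecutive pairs are edges, vertices are
pairwise distinct, the first vertex is `s` and the last is `t`. -/
def isSTPath (n : ℕ) (P : List (Vtx n)) : Prop :=
  P.Chain' (GEdge n) ∧ P.Nodup ∧ P.head? = some Vtx.s ∧ P.getLast? = some Vtx.t

/-- A path follows the assignment `α` if for every index `i`, each of its vertices with
index `i` is a `t`-vertex when `α i = true` and an `f`-vertex when `α i = false`. -/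
def follows (n : ℕ) (α : Fin n → Bool) (P : List (Vtx n)) : Prop :=
  ∀ (i : Fin n) (second v : Bool), Vtx.mid i second v ∈ P → v = α i

/-- The assignment `α` satisfies the clause `C` if it makes some literal of `C` true. -/
def satisfiesClause (n : ℕ) (α : Fin n → Bool) (C : Finset (Fin n × Bool)) : Prop :=
  ∃ l ∈ C, α l.1 = l.2


lemma cross_lemma {V : Type*} (R : V → V → Prop) (f : V → Bool) :
    ∀ (P : List V), P.Chain' R → ∀ a b, P.head? = some a → f a = false →
      P.getLast? = some b → f b = true →
      ∃ x y, (x, y) ∈ P.zip P.tail ∧ R x y ∧ f x = false ∧ f y = true := by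
  intro P
  induction P with
  | nil => intro _ a b ha; simp at ha
  | cons hd tl ih =>
    intro hc a b ha hfa hb hfb
    cases tl with
    | nil =>
      simp at ha hb; subst ha; subst hb; simp [hfb] at hfa
    | cons hd2 tl2 =>
      simp at ha; subst ha
      rcases List.isChain_cons_cons.mp hc with ⟨hR, hc2⟩
      cases hf2 : f hd2 with
      | true => exact ⟨hd, hd2, by simp, hR, hfa, hf2⟩
      | false =>
        obtain ⟨x, y, hm, h1, h2, h3⟩ := ih hc2 hd2 b rfl hf2
          (by rw [← hb, List.getLast?_cons_cons]) hfb
        exact ⟨x, y, by simp at hm ⊢; right; exact hm, h1, h2, h3⟩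

lemma zip_range'_succ : ∀ (m a : ℕ) {x y : ℕ},
    (x, y) ∈ (List.range' a m).zip (List.range' a m).tail → y = x + 1 := by
  intro m
  induction m with
  | zero => intro a x y h; simp at h
  | succ k ih =>
    intro a x y h
    cases k with
    | zero => simp at h
    | succ k' =>
      rw [List.range'_succ] at h
      simp only [List.tail_cons] at h
      rw [List.range'_succ, List.zip_cons_cons] at h
      rcases List.mem_cons.mp h with h | h
      · simp at h; omega
      · exact ih (a+1) (by rw [List.range'_succ]; simpa using h)

/-- The canonical path for assignment `α`, switching lanes at index `i`. -/
def pathFun (n : ℕ) (α : Fin n → Bool) (i : Fin n) (k : ℕ) : Vtx n :=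
  if k = 0 then .s
  else if h : k ≤ (i : ℕ) + 1 then
    .mid ⟨k - 1, by have := i.isLt; omega⟩ false (α ⟨k - 1, by have := i.isLt; omega⟩)
  else if h2 : k ≤ n + 1 then
    .mid ⟨k - 2, by omega⟩ true (α ⟨k - 2, by omega⟩)
  else .t

lemma pathFun_chain (n : ℕ) (α : Fin n → Bool) (i : Fin n) :
    ∀ k < n + 2, GEdge n (pathFun n α i k) (pathFun n α i (k+1)) := by
  intro k hk
  have hi := i.isLt
  simp only [pathFun]
  split_ifs <;>
    first
      | omega
      | (simp only [GEdge]; try constructor)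
        <;> first
          | omega
          | (simp only [Fin.ext_iff]; omega)
          | (congr 1 <;> simp only [Fin.ext_iff] <;> omega)
          | trivial


/-- The gap underlying the inapproximability claim: if `φ` is unsatisfiable, then for
every assignment `α` there is a clause index `j` such that every directed `s`-`t` path
in `G_φ` following `α` has cost at least `1` under `c^j`; whereas if `φ` is satisfiable
there is an assignment `α` such that for every `j` some directed `s`-`t` path following
`α` has total cost `0` under `c^j`. -/
theorem stmt9 (n m : ℕ) (hn : 1 ≤ n) (hm : 1 ≤ m)
    (C : Fin m → Finset (Fin n × Bool)) (hC : ∀ j, (C j).card ≤ 3) :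
    ((¬ ∃ α : Fin n → Bool, ∀ j : Fin m, satisfiesClause n α (C j)) →
      ∀ α : Fin n → Bool, ∃ j : Fin m,
        ∀ P : List (Vtx n), isSTPath n P → follows n α P → 1 ≤ pathCost n (C j) P) ∧
    ((∃ α : Fin n → Bool, ∀ j : Fin m, satisfiesClause n α (C j)) →
      ∃ α : Fin n → Bool, ∀ j : Fin m,
        ∃ P : List (Vtx n), isSTPath n P ∧ follows n α P ∧ pathCost n (C j) P = 0) := by
  constructor
  · -- unsatisfiable direction
    intro hunsat α
    have hj : ∃ j, ¬ satisfiesClause n α (C j) := by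
      by_contra h
      push_neg at h
      exact hunsat ⟨α, h⟩
    obtain ⟨j, hj⟩ := hj
    refine ⟨j, fun P hP hF => ?_⟩
    obtain ⟨hchain, _, hhead, hlast⟩ := hP
    obtain ⟨x, y, hm, hR, hfx, hfy⟩ :=
      cross_lemma (GEdge n)
        (fun v => match v with | .s => false | .t => true | .mid _ sec _ => sec)
        P hchain _ _ hhead rfl hlast rfl
    have hxP : x ∈ P := (List.of_mem_zip hm).1
    cases x with
    | t => simp at hfx
    | s =>
      cases y with
      | s => simp at hfy
      | t => exact absurd hR (by simp [GEdge])
      | mid i2 sec2 v2 =>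
        simp at hfy; subst hfy
        exact absurd hR (by simp [GEdge])
    | mid i1 sec1 v1 =>
      simp at hfx; subst hfx
      cases y with
      | s => simp at hfy
      | t => exact absurd hR (by simp [GEdge])
      | mid i2 sec2 v2 =>
        simp at hfy; subst hfy
        simp only [GEdge] at hR
        obtain ⟨he1, he2⟩ := hR
        have hv1 : v1 = α i1 := hF i1 false v1 hxP
        have hnot : (i1, v1) ∉ C j := by
          rw [hv1]; exact fun hmem => hj ⟨(i1, α i1), hmem, rfl⟩
        have hcost : cost n (C j) (Vtx.mid i1 false v1) (Vtx.mid i2 true v2) = 1 := by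
          simp [cost, he1, he2, hnot]
        calc 1 = cost n (C j) (Vtx.mid i1 false v1) (Vtx.mid i2 true v2) := hcost.symm
          _ ≤ pathCost n (C j) P := by
              apply List.single_le_sum (fun _ _ => Nat.zero_le _)
              exact List.mem_map_of_mem hm
  · -- satisfiable direction
    rintro ⟨α, hα⟩
    refine ⟨α, fun j => ?_⟩
    obtain ⟨l, hl, hla⟩ := hα j
    have hC' : (l.1, α l.1) ∈ C j := by
      have : (l.1, α l.1) = l := by rw [hla]
      rwa [this]
    set i : Fin n := l.1 with hi_def
    have hi := i.isLt
    set g : ℕ → Vtx n := pathFun n α i with hg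
    refine ⟨(List.range (n+3)).map g, ⟨?_, ?_, ?_, ?_⟩, ?_, ?_⟩
    · -- chain
      have h3 : n + 3 = (n + 2) + 1 := rfl
      show List.IsChain _ _
      rw [List.isChain_map, h3, List.isChain_range_succ]
      exact pathFun_chain n α i
    · -- nodup
      refine List.Nodup.map_on ?_ List.nodup_range
      intro a ha b hb h
      rw [List.mem_range] at ha hb
      simp only [hg, pathFun] at h
      split_ifs at h <;>
        first
          | omega
          | (simp only [Vtx.mid.injEq, Fin.mk.injEq] at h; omega)
          | simp at h
    · -- head
      have h3 : n + 3 = (n + 2) + 1 := rfl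
      rw [h3, List.range_succ_eq_map]
      simp [hg, pathFun]
    · -- last
      have h3 : n + 3 = (n + 2) + 1 := rfl
      rw [h3, List.range_succ, List.map_append]
      simp only [List.map_cons, List.map_nil, List.getLast?_concat]
      simp only [hg, pathFun]
      rw [if_neg (by omega), dif_neg (by omega), dif_neg (by omega)]
    · -- follows
      intro i' s' v' hmem
      rw [List.mem_map] at hmem
      obtain ⟨k, _, h⟩ := hmem
      simp only [hg, pathFun] at h
      split_ifs at h <;>
        first
          | (rw [Vtx.mid.injEq] at h
             obtain ⟨h1, _, h3⟩ := h
             subst h1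
             exact h3.symm)
          | simp at h
    · -- pathCost = 0
      apply List.sum_eq_zero
      intro c hc
      rw [List.mem_map] at hc
      obtain ⟨q, hq, rfl⟩ := hc
      rw [← List.map_tail, List.zip_map, List.mem_map] at hq
      obtain ⟨p, hp, rfl⟩ := hq
      have hyx : p.2 = p.1 + 1 := by
        apply zip_range'_succ (n+3) 0
        rwa [← List.range_eq_range']
      obtain ⟨x, y⟩ := p
      simp only at hyx
      subst hyx
      show cost n (C j) (g x) (g (x+1)) = 0
      by_cases hb : x = (i : ℕ) + 1
      · subst hb
        simp only [hg, pathFun]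
        rw [if_neg (by omega), dif_pos (by omega), if_neg (by omega),
          dif_neg (by omega), dif_pos (by omega)]
        have e1 : (⟨(i:ℕ) + 1 - 1, by omega⟩ : Fin n) = i := by simp [Fin.ext_iff]
        have e2 : (⟨(i:ℕ) + 1 + 1 - 2, by omega⟩ : Fin n) = i := by simp [Fin.ext_iff]
        rw [e1, e2]
        simp [cost, hC']
      · simp only [hg, pathFun]
        split_ifs <;> first | omega | simp [cost]
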